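/- For any c ∈ ℝ, ∫₀^∞ exp(−z²)·erf(c·z) dz = arctan(c)/√π. -/

import Mathlib

open MeasureTheory Real

/-- The error function. -/
noncomputable def erf (x : ℝ) : ℝ :=
  (2 / Real.sqrt Real.pi) * ∫ t in (0:ℝ)..x, Real.exp (-t^2)

lemma erf_neg (x : ℝ) : erf (-x) = - erf x := by
  unfold erf
  rw [← mul_neg]
  congr 1
  have h := intervalIntegral.integral_comp_neg (a := (0:ℝ)) (b := x) (fun t => Real.exp (-t^2))
  simp only [neg_neg, neg_zero, neg_sq] at h
  have h2 := intervalIntegral.integral_symm (f := fun t => Real.exp (-t^2)) (μ := volume) (-x) 0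
  rw [h2, h]

lemma integral_mul_exp_neg_mul_sq_real {b : ℝ} (hb : 0 < b) :
    ∫ r in Set.Ioi (0:ℝ), r * Real.exp (-b * r ^ 2) = (2 * b)⁻¹ := by
  have hderiv : ∀ x ∈ Set.Ici (0:ℝ),
      HasDerivAt (fun x : ℝ => -(2 * b)⁻¹ * Real.exp (-b * x ^ 2))
        (x * Real.exp (-b * x ^ 2)) x := by
    intro x _
    have h1 : HasDerivAt (fun x : ℝ => -b * x ^ 2) (-b * (2 * x)) x := by
      simpa using ((hasDerivAt_pow 2 x).const_mul (-b))
    have h2 := (h1.exp).const_mul (-(2 * b)⁻¹)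
    refine h2.congr_deriv ?_
    have hbb : (2 * b)⁻¹ * (2 * b) = 1 := inv_mul_cancel₀ (by positivity)
    linear_combination (x * Real.exp (-b * x ^ 2)) * hbb
  have hint : IntegrableOn (fun x : ℝ => x * Real.exp (-b * x ^ 2)) (Set.Ioi 0) :=
    (integrable_mul_exp_neg_mul_sq hb).integrableOn
  have htend : Filter.Tendsto (fun x : ℝ => -(2 * b)⁻¹ * Real.exp (-b * x ^ 2))
      Filter.atTop (nhds 0) := by
    have : Filter.Tendsto (fun x : ℝ => Real.exp (-b * x ^ 2)) Filter.atTop (nhds 0) := by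
      apply Real.tendsto_exp_atBot.comp
      have h2 : Filter.Tendsto (fun x : ℝ => x ^ 2) Filter.atTop Filter.atTop :=
        Filter.tendsto_pow_atTop (by norm_num)
      have h3 := h2.const_mul_atTop hb
      exact (Filter.tendsto_neg_atBot_iff.mpr h3).congr (fun x => by ring)
    simpa using this.const_mul (-(2 * b)⁻¹)
  have := MeasureTheory.integral_Ioi_of_hasDerivAt_of_tendsto'
    (fun x hx => hderiv x hx) hint htend
  rw [this]
  simp

theorem integral_exp_neg_sq_mul_erf_nonneg (c : ℝ) (hc : 0 ≤ c) :
    ∫ z in Set.Ioi (0:ℝ), Real.exp (-z^2) * erf (c * z) =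
      Real.arctan c / Real.sqrt Real.pi := by
  have hπ : (0:ℝ) < Real.sqrt Real.pi := Real.sqrt_pos.mpr Real.pi_pos
  -- Step 1: rewrite the integrand as a double integral
  have key : ∀ z ∈ Set.Ioi (0:ℝ),
      Real.exp (-z^2) * erf (c * z)
        = ∫ u in Set.Ioc (0:ℝ) c,
            (2 / Real.sqrt Real.pi) * (z * Real.exp (-(1 + u ^ 2) * z ^ 2)) := by
    intro z hz
    have hz0 : (0:ℝ) < z := hz
    have hsub : ∫ t in (0:ℝ)..(c * z), Real.exp (-t ^ 2)
        = z * ∫ u in (0:ℝ)..c, Real.exp (-(z * u) ^ 2) := by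
      rw [intervalIntegral.integral_comp_mul_left (fun t => Real.exp (-t^2)) hz0.ne']
      rw [smul_eq_mul, ← mul_assoc]
      rw [mul_inv_cancel₀ hz0.ne', one_mul, mul_zero, mul_comm z c]
    have hIoc : ∫ u in (0:ℝ)..c, Real.exp (-(z * u) ^ 2)
        = ∫ u in Set.Ioc (0:ℝ) c, Real.exp (-(z * u) ^ 2) :=
      intervalIntegral.integral_of_le hc
    unfold erf
    rw [hsub, hIoc, ← MeasureTheory.integral_const_mul, ← MeasureTheory.integral_const_mul,
      ← MeasureTheory.integral_const_mul]
    congr 1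
    ext u
    rw [show (-(1 + u ^ 2) * z ^ 2) = (-z ^ 2) + (-(z * u) ^ 2) by ring, Real.exp_add]
    ring
  rw [MeasureTheory.setIntegral_congr_fun measurableSet_Ioi key]
  -- Step 2: Fubini
  have hInt : Integrable (Function.uncurry fun z u =>
      (2 / Real.sqrt Real.pi) * (z * Real.exp (-(1 + u ^ 2) * z ^ 2)))
      ((volume.restrict (Set.Ioi (0:ℝ))).prod (volume.restrict (Set.Ioc (0:ℝ) c))) := by
    have hmeas : AEStronglyMeasurable (Function.uncurry fun z u =>
        (2 / Real.sqrt Real.pi) * (z * Real.exp (-(1 + u ^ 2) * z ^ 2)))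
        ((volume.restrict (Set.Ioi (0:ℝ))).prod (volume.restrict (Set.Ioc (0:ℝ) c))) := by
      apply Continuous.aestronglyMeasurable
      apply continuous_const.mul
      exact (continuous_fst.mul (((continuous_const.add
        (continuous_snd.pow 2)).neg.mul (continuous_fst.pow 2)).rexp))
    have hA : Integrable (fun x : ℝ => (2 / Real.sqrt Real.pi) * (|x| * Real.exp (-x ^ 2)))
        (volume.restrict (Set.Ioi (0:ℝ))) := by
      have h1 : Integrable (fun x : ℝ => x * Real.exp (-1 * x ^ 2)) volume :=
        integrable_mul_exp_neg_mul_sq one_pos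
      have h2 := h1.abs
      have h3 : Integrable (fun x : ℝ => (2 / Real.sqrt Real.pi) * (|x| * Real.exp (-x ^ 2)))
          volume := by
        apply Integrable.const_mul
        refine h2.congr ?_
        filter_upwards with x
        rw [abs_mul, abs_of_pos (Real.exp_pos _)]
        norm_num
      exact h3.restrict
    have hB : Integrable (fun _ : ℝ => (1:ℝ)) (volume.restrict (Set.Ioc (0:ℝ) c)) :=
      integrableOn_const (measure_Ioc_lt_top).ne
    have hg : Integrable (fun p : ℝ × ℝ =>
        (2 / Real.sqrt Real.pi) * (|p.1| * Real.exp (-p.1 ^ 2)))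
        ((volume.restrict (Set.Ioi (0:ℝ))).prod (volume.restrict (Set.Ioc (0:ℝ) c))) := by
      have := Integrable.mul_prod hA hB
      simpa using this
    refine hg.mono' hmeas ?_
    filter_upwards with p
    rw [Function.uncurry]
    simp only [norm_mul, Real.norm_eq_abs]
    rw [abs_of_pos (by positivity : (0:ℝ) < 2 / Real.sqrt Real.pi)]
    apply mul_le_mul_of_nonneg_left _ (by positivity)
    rw [abs_of_pos (Real.exp_pos _)]
    apply mul_le_mul_of_nonneg_left _ (abs_nonneg _)
    apply Real.exp_le_exp.mpr
    nlinarith [sq_nonneg p.1, sq_nonneg p.2, sq_nonneg (p.1 * p.2)]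
  rw [MeasureTheory.integral_integral_swap hInt]
  -- Step 3: compute the inner integral
  have inner : ∀ u : ℝ,
      ∫ z in Set.Ioi (0:ℝ),
          (2 / Real.sqrt Real.pi) * (z * Real.exp (-(1 + u ^ 2) * z ^ 2))
        = (2 / Real.sqrt Real.pi) * (2 * (1 + u ^ 2))⁻¹ := by
    intro u
    rw [MeasureTheory.integral_const_mul,
      integral_mul_exp_neg_mul_sq_real (by positivity : (0:ℝ) < 1 + u ^ 2)]
  simp_rw [inner]
  -- Step 4: compute the outer integral
  rw [← intervalIntegral.integral_of_le hc]
  have : ∀ u : ℝ, (2 / Real.sqrt Real.pi) * (2 * (1 + u ^ 2))⁻¹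
      = (1 / Real.sqrt Real.pi) * (1 / (1 + u ^ 2)) := by
    intro u
    have : (0:ℝ) < 1 + u ^ 2 := by positivity
    field_simp
  simp_rw [this]
  rw [intervalIntegral.integral_const_mul, integral_one_div_one_add_sq]
  simp [div_eq_mul_inv, mul_comm]

theorem integral_exp_neg_sq_mul_erf (c : ℝ) :
    ∫ z in Set.Ioi (0:ℝ), Real.exp (-z^2) * erf (c * z) =
      Real.arctan c / Real.sqrt Real.pi := by
  rcases le_or_gt 0 c with hc | hc
  · exact integral_exp_neg_sq_mul_erf_nonneg c hc
  · have h := integral_exp_neg_sq_mul_erf_nonneg (-c) (by linarith)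
    have : ∀ z : ℝ, Real.exp (-z^2) * erf (c * z)
        = -(Real.exp (-z^2) * erf ((-c) * z)) := by
      intro z
      rw [show (-c) * z = -(c * z) by ring, erf_neg]
      ring
    simp_rw [this]
    rw [MeasureTheory.integral_neg, h, Real.arctan_neg]
    ring
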